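/- Let n ≥ 1, let f : ℝⁿ → ℝ be scaling-invariant with respect to 0, let x₀ ∈ ℝⁿ with x₀ ≠ 0, and let 0 < ε < ‖x₀‖ (Euclidean norm). If f is constant on the open Euclidean ball B(x₀, ε) (a local plateau), then f is constant on the whole open ray {t·x₀ : t > 0}. -/

import Mathlib

/-- `f` is scaling-invariant with respect to `xstar`. -/
def ScalingInvariant {n : ℕ} (f : EuclideanSpace ℝ (Fin n) → ℝ)
    (xstar : EuclideanSpace ℝ (Fin n)) : Prop :=
  ∀ ρ : ℝ, 0 < ρ → ∀ x y : EuclideanSpace ℝ (Fin n),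
    (f (ρ • (x - xstar)) ≤ f (ρ • (y - xstar)) ↔ f (x - xstar) ≤ f (y - xstar))

/-- if a scaling-invariant function (w.r.t. `0`) is constant on an open
ball `B(x₀, ε)` with `0 < ε < ‖x₀‖`, then it is constant on the open ray `{t • x₀ : t > 0}`. -/
theorem scalingInvariant_constant_on_ray_of_plateau {n : ℕ} (hn : 1 ≤ n)
    (f : EuclideanSpace ℝ (Fin n) → ℝ) (hf : ScalingInvariant f 0)
    (x₀ : EuclideanSpace ℝ (Fin n)) (hx₀ : x₀ ≠ 0)
    (ε : ℝ) (hε : 0 < ε) (hεlt : ε < ‖x₀‖)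
    (hconst : ∀ x ∈ Metric.ball x₀ ε, ∀ y ∈ Metric.ball x₀ ε, f x = f y) :
    ∀ s t : ℝ, 0 < s → 0 < t → f (s • x₀) = f (t • x₀) := by
  have hx₀norm : 0 < ‖x₀‖ := norm_pos_iff.mpr hx₀
  set δ : ℝ := ε / ‖x₀‖ with hδdef
  have hδ : 0 < δ := div_pos hε hx₀norm
  -- equality form of scaling invariance
  have hscale : ∀ ρ : ℝ, 0 < ρ → ∀ x y, f x = f y → f (ρ • x) = f (ρ • y) := by
    intro ρ hρ x y hxy
    have h1 := hf ρ hρ x y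
    have h2 := hf ρ hρ y x
    simp only [sub_zero] at h1 h2
    exact le_antisymm (h1.mpr hxy.le) (h2.mpr hxy.ge)
  -- plateau: f (u • x₀) = f x₀ for |u - 1| < δ
  have hplateau : ∀ u : ℝ, |u - 1| < δ → f (u • x₀) = f x₀ := by
    intro u hu
    apply hconst
    · rw [Metric.mem_ball, dist_eq_norm]
      have : u • x₀ - x₀ = (u - 1) • x₀ := by rw [sub_smul, one_smul]
      rw [this, norm_smul, Real.norm_eq_abs]
      calc |u - 1| * ‖x₀‖ < δ * ‖x₀‖ := by
            exact mul_lt_mul_of_pos_right hu hx₀norm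
        _ = ε := by rw [hδdef]; exact div_mul_cancel₀ ε hx₀norm.ne'
    · exact Metric.mem_ball_self hε
  set g : ℝ → ℝ := fun t => f (t • x₀) with hg
  have hstep : ∀ ρ : ℝ, 0 < ρ → ∀ u : ℝ, |u - 1| < δ → g (ρ * u) = g ρ := by
    intro ρ hρ u hu
    have := hscale ρ hρ (u • x₀) x₀ (hplateau u hu)
    simpa [g, smul_smul] using this
  set r : ℝ := 1 + δ / 2 with hrdef
  have hr1 : 1 < r := by simp [hrdef]; positivity
  have hrδ : |r - 1| < δ := by
    rw [hrdef]
    have : (1 : ℝ) + δ / 2 - 1 = δ / 2 := by ring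
    rw [this, abs_of_pos (by positivity)]
    linarith
  have hrpos : 0 < r := lt_trans one_pos hr1
  -- g (ρ * r ^ k) = g ρ for all integers k
  have hzpow : ∀ k : ℤ, ∀ ρ : ℝ, 0 < ρ → g (ρ * r ^ k) = g ρ := by
    intro k
    induction k using Int.induction_on with
    | zero => intro ρ hρ; simp
    | succ k ih =>
      intro ρ hρ
      have h1 : ρ * r ^ ((k : ℤ) + 1) = (ρ * r ^ (k : ℤ)) * r := by
        rw [zpow_add_one₀ (ne_of_gt hrpos)]; ring
      have hpos : 0 < ρ * r ^ (k : ℤ) := mul_pos hρ (zpow_pos hrpos _)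
      rw [h1, hstep _ hpos r hrδ, ih ρ hρ]
    | pred k ih =>
      intro ρ hρ
      have hpos : 0 < ρ * r ^ (-(k : ℤ) - 1) := mul_pos hρ (zpow_pos hrpos _)
      have h1 : (ρ * r ^ (-(k : ℤ) - 1)) * r = ρ * r ^ (-(k : ℤ)) := by
        rw [mul_assoc, ← zpow_add_one₀ (ne_of_gt hrpos)]; ring_nf
      have h2 := hstep _ hpos r hrδ
      rw [h1] at h2
      rw [← h2]
      exact ih ρ hρ
  intro s t hs ht
  obtain ⟨k, hk⟩ := exists_mem_Ico_zpow (x := t / s) (div_pos ht hs) hr1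
  obtain ⟨hk1, hk2⟩ := hk
  set u : ℝ := (t / s) / r ^ k with hudef
  have hrk : (0 : ℝ) < r ^ k := zpow_pos hrpos _
  have hu1 : 1 ≤ u := (one_le_div hrk).mpr hk1
  have hu2 : u < r := by
    rw [hudef, div_lt_iff₀ hrk]
    calc t / s < r ^ (k + 1) := hk2
      _ = r * r ^ k := by rw [zpow_add_one₀ (ne_of_gt hrpos)]; ring
  have huδ : |u - 1| < δ := by
    rw [abs_of_nonneg (by linarith)]
    have : r - 1 < δ := by
      have := hrδ; rwa [abs_of_pos (by linarith)] at this
    linarith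
  have ht' : t = (s * r ^ k) * u := by
    rw [hudef]; field_simp
  have hpos : 0 < s * r ^ k := mul_pos hs hrk
  show g s = g t
  rw [ht', hstep _ hpos u huδ, hzpow k s hs]
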